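/- Let T be a binary tree of size n. Then B_T(1), the value of the Tamari polynomial of T at x = 1, equals the number of binary trees T' of size n with T' ≤ T in the Tamari order. -/

import Mathlib

open Polynomial

/-- A binary tree: either the empty tree or a pair of binary trees
(left and right subtrees) grafted on an internal node. -/
inductive BinTree : Type
  | leaf : BinTree
  | node : BinTree → BinTree → BinTree

namespace BinTree

/-- The size of a binary tree: its number of internal nodes. -/
def size : BinTree → ℕ
  | leaf => 0
  | node l r => l.size + r.size + 1

/-- One right rotation somewhere in the tree: `Rot T T'` means that `T'` is obtained
from `T` by replacing one subtree of the form `y(x(A,B),C)` by `x(A,y(B,C))`. -/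
inductive Rot : BinTree → BinTree → Prop
  | root (A B C : BinTree) : Rot (node (node A B) C) (node A (node B C))
  | left {L L' : BinTree} (R : BinTree) : Rot L L' → Rot (node L R) (node L' R)
  | right (L : BinTree) {R R' : BinTree} : Rot R R' → Rot (node L R) (node L R')

/-- The Tamari order: `TamariLE T T'` iff `T'` is obtained from `T` by a (possibly empty)
sequence of right rotations. -/
def TamariLE (T T' : BinTree) : Prop := Relation.ReflTransGen Rot T T'

/-- The Tamari polynomial `B_T ∈ ℤ[x]`: `B_∅ = 1` and for `T = x(L,R)`, `B_T` is the
unique polynomial with `(x-1)·B_T = x·B_L·(x·B_R - B_R(1))` (exact division by the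
monic polynomial `X - 1`, the right-hand side vanishing at `x = 1`). -/
noncomputable def tamPoly : BinTree → Polynomial ℤ
  | leaf => 1
  | node l r =>
      (X * tamPoly l * (X * tamPoly r - C ((tamPoly r).eval 1))) /ₘ (X - C 1)

/-- The mirror Tamari polynomial, obtained by exchanging the roles of the left and
right subtrees in the recursive definition of the Tamari polynomial. -/
noncomputable def tamPolyMirror : BinTree → Polynomial ℤ
  | leaf => 1
  | node l r =>
      (X * tamPolyMirror r * (X * tamPolyMirror l - C ((tamPolyMirror l).eval 1))) /ₘ (X - C 1)

/-- The number of nodes on the left border of a binary tree. -/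
def leftBorder : BinTree → ℕ
  | leaf => 0
  | node l _ => l.leftBorder + 1

/-- The number of nodes on the right border of a binary tree. -/
def rightBorder : BinTree → ℕ
  | leaf => 0
  | node _ r => r.rightBorder + 1

/-- `inSub T a b`: in the unique binary-search-tree labelling of `T` by `1,…,size T`
(all labels of the left subtree of a node are smaller than its label, all labels of its
right subtree are larger), the node labelled `a` belongs to the subtree rooted at the
node labelled `b` (in particular `inSub T a a` holds for every node label `a`). -/
def inSub : BinTree → ℕ → ℕ → Prop
  | leaf => fun _ _ => False
  | node l r => fun a b =>
      (b = l.size + 1 ∧ 1 ≤ a ∧ a ≤ l.size + r.size + 1) ∨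
      inSub l a b ∨
      (l.size + 1 < a ∧ l.size + 1 < b ∧ inSub r (a - (l.size + 1)) (b - (l.size + 1)))

/-- The binary search tree poset of `T`: `bstRel T a b` iff `a ≺_T b`, i.e. `a ≠ b` and
the node labelled `a` is in the subtree rooted at the node labelled `b`. -/
def bstRel (T : BinTree) (a b : ℕ) : Prop := a ≠ b ∧ inSub T a b

/-- The increasing forest `inc(T)`: `a ≺ b` iff `a < b` and `a ≺_T b`. -/
def incRel (T : BinTree) (a b : ℕ) : Prop := a < b ∧ bstRel T a b

/-- The decreasing forest `dec(T)`: `b ≺ a` iff `b > a` and `b ≺_T a`. -/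
def decRel (T : BinTree) (a b : ℕ) : Prop := b < a ∧ bstRel T a b

/-- The relations of the interval-poset `IP[T,T']`: exactly those of `dec(T)`
together with those of `inc(T')`. -/
def IPrel (T T' : BinTree) (a b : ℕ) : Prop := decRel T a b ∨ incRel T' a b

end BinTree

open BinTree

/-- `σ` is a linear extension of the strict relation `rel` on `{1,…,n}`: reading the word
`σ(1)…σ(n)` (the `i`-th letter being the label `(σ i : ℕ) + 1`), whenever `rel a b` holds
the letter `a` appears before the letter `b`. -/
def IsLinExt (n : ℕ) (rel : ℕ → ℕ → Prop) (σ : Equiv.Perm (Fin n)) : Prop :=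
  ∀ i j : Fin n, rel ((σ i : ℕ) + 1) ((σ j : ℕ) + 1) → i < j

/-- An interval-poset of size `n`: a (strict) poset on `{1,…,n}` such that
`a ≺ c` implies `b ≺ c` for all `a < b < c`, and `c ≺ a` implies `b ≺ a` for all
`a < b < c`. -/
def IsIntervalPoset (n : ℕ) (rel : ℕ → ℕ → Prop) : Prop :=
  (∀ a b, rel a b → 1 ≤ a ∧ a ≤ n ∧ 1 ≤ b ∧ b ≤ n) ∧
  (∀ a, ¬ rel a a) ∧
  (∀ a b c, rel a b → rel b c → rel a c) ∧
  (∀ a b c, a < b → b < c → rel a c → rel b c) ∧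
  (∀ a b c, a < b → b < c → rel c a → rel b a)

/-- `trees(P)` : the number of connected components of the forest formed by the decreasing
relations of `P`, i.e. the number of `k ∈ {1,…,n}` such that there is no `j < k`
with `k ≺_P j`. -/
noncomputable def treeStat (n : ℕ) (rel : ℕ → ℕ → Prop) : ℕ :=
  Set.ncard {k : ℕ | 1 ≤ k ∧ k ≤ n ∧ ∀ j, j < k → ¬ rel k j}

/-- The composition `𝔹(I1,I2)` of two interval-posets of sizes `k1` and `k2`:
the set of interval-posets `I` of size `k1+k2+1` such that
(i) the relations of `I` among `1,…,k1` are exactly those of `I1`,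
(ii) the relations of `I` among `k1+2,…,k1+k2+1` are exactly those of `I2` shifted
by `k1+1`, (iii) `i ≺_I k1+1` for all `i ≤ k1`, and (iv) there is no relation
`k1+1 ≺_I j` for `j > k1+1`. -/
def Comp (k1 k2 : ℕ) (I1 I2 : ℕ → ℕ → Prop) : Set (ℕ → ℕ → Prop) :=
  {I | IsIntervalPoset (k1 + k2 + 1) I ∧
    (∀ a b, 1 ≤ a → a ≤ k1 → 1 ≤ b → b ≤ k1 → (I a b ↔ I1 a b)) ∧
    (∀ a b, k1 + 2 ≤ a → a ≤ k1 + k2 + 1 → k1 + 2 ≤ b → b ≤ k1 + k2 + 1 →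
      (I a b ↔ I2 (a - (k1 + 1)) (b - (k1 + 1)))) ∧
    (∀ i, 1 ≤ i → i ≤ k1 → I i (k1 + 1)) ∧
    (∀ j, k1 + 1 < j → ¬ I (k1 + 1) j)}

/-- The co-inversions of a permutation `σ` of `{1,…,n}` (written as the word
`σ(1)…σ(n)`): pairs `(σ(i), σ(j))` with `i < j` and `σ(i) > σ(j)`. -/
def coinv (n : ℕ) (σ : Equiv.Perm (Fin n)) : Set (Fin n × Fin n) :=
  {p | ∃ i j : Fin n, i < j ∧ σ j < σ i ∧ p = (σ i, σ j)}

namespace BinTree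

deriving instance DecidableEq for BinTree

theorem Rot.size_eq {t t' : BinTree} (h : Rot t t') : t.size = t'.size := by
  induction h with
  | root A B C => simp [size]; omega
  | left R h ih => simp [size, ih]
  | right L h ih => simp [size, ih]

theorem TamariLE.size_eq {t t' : BinTree} (h : TamariLE t t') : t.size = t'.size := by
  induction h with
  | refl => rfl
  | tail _ h ih => exact ih.trans h.size_eq

theorem TamariLE.refl (t : BinTree) : TamariLE t t := Relation.ReflTransGen.refl

theorem TamariLE.trans {a b c : BinTree} (h : TamariLE a b) (h' : TamariLE b c) :
    TamariLE a c := Relation.ReflTransGen.trans h h'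

theorem Rot.tamariLE {a b : BinTree} (h : Rot a b) : TamariLE a b :=
  Relation.ReflTransGen.single h

theorem TamariLE.nodeLeft {l l' : BinTree} (h : TamariLE l l') (r : BinTree) :
    TamariLE (node l r) (node l' r) :=
  Relation.ReflTransGen.lift (fun x => node x r) (fun _ _ hr => Rot.left r hr) _ _ h

theorem TamariLE.nodeRight (l : BinTree) {r r' : BinTree} (h : TamariLE r r') :
    TamariLE (node l r) (node l r') :=
  Relation.ReflTransGen.lift (fun x => node l x) (fun _ _ hr => Rot.right l hr) _ _ h

theorem TamariLE.node {l l' r r' : BinTree} (hl : TamariLE l l') (hr : TamariLE r r') :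
    TamariLE (node l r) (node l' r') :=
  (hl.nodeLeft r).trans (TamariLE.nodeRight l' hr)

theorem eq_leaf_of_tamariLE_leaf {t : BinTree} (h : TamariLE t leaf) : t = leaf := by
  have := h.size_eq
  cases t with
  | leaf => rfl
  | node l r => simp [size] at this

/-- Graft `L` on the left border of `r` at depth `i`. -/
def graft (L : BinTree) : BinTree → ℕ → BinTree
  | r, 0 => node L r
  | leaf, _+1 => node L leaf
  | node a b, i+1 => node (graft L a i) b

@[simp] theorem graft_zero (L r : BinTree) : graft L r 0 = node L r := by
  cases r <;> rfl

@[simp] theorem graft_succ (L a b : BinTree) (i : ℕ) :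
    graft L (node a b) (i+1) = node (graft L a i) b := rfl

theorem leftBorder_graft (L : BinTree) : ∀ {r : BinTree} {i : ℕ}, i ≤ r.leftBorder →
    (graft L r i).leftBorder = L.leftBorder + i + 1
  | r, 0, _ => by simp [graft, leftBorder]
  | leaf, i+1, h => by simp [leftBorder] at h
  | node a b, i+1, h => by
      have := leftBorder_graft L (r := a) (i := i) (by simpa [leftBorder] using h)
      simp [graft, leftBorder, this]; omega

theorem size_graft (L : BinTree) : ∀ {r : BinTree} {i : ℕ}, i ≤ r.leftBorder →
    (graft L r i).size = L.size + r.size + 1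
  | r, 0, _ => by simp [graft, size]
  | leaf, i+1, h => by simp [leftBorder] at h
  | node a b, i+1, h => by
      have := size_graft L (r := a) (i := i) (by simpa [leftBorder] using h)
      simp [graft, size, this]; omega

/-- The subtree rooted at the node at depth `i` on the left border. -/
def spineSub : BinTree → ℕ → BinTree
  | t, 0 => t
  | leaf, _+1 => leaf
  | node l _, i+1 => spineSub l i

theorem spineSub_graft (L : BinTree) : ∀ {r : BinTree} {i : ℕ}, i ≤ r.leftBorder →
    spineSub (graft L r i) (i+1) = L
  | r, 0, _ => by simp [graft, spineSub]
  | leaf, i+1, h => by simp [leftBorder] at h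
  | node a b, i+1, h => by
      have := spineSub_graft L (r := a) (i := i) (by simpa [leftBorder] using h)
      simpa [graft, spineSub] using this

theorem size_spineSub_succ_lt : ∀ {t : BinTree} {j : ℕ}, j < t.leftBorder →
    (spineSub t (j+1)).size < (spineSub t j).size
  | leaf, j, h => by simp [leftBorder] at h
  | node l r, 0, _ => by simp [spineSub, size]
  | node l r, j+1, h => by
      have := size_spineSub_succ_lt (t := l) (j := j) (by simpa [leftBorder] using h)
      simpa [spineSub] using this

theorem size_spineSub_lt_of_lt {t : BinTree} {i j : ℕ} (hij : i < j) (hj : j ≤ t.leftBorder) :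
    (spineSub t j).size < (spineSub t i).size := by
  induction j with
  | zero => omega
  | succ j ih =>
      have hstep := size_spineSub_succ_lt (t := t) (j := j) (by omega)
      rcases Nat.lt_or_ge i j with h' | h'
      · exact hstep.trans (ih h' (by omega))
      · have : i = j := by omega
        subst this; exact hstep

theorem rot_graft_succ (L : BinTree) : ∀ {r : BinTree} {i : ℕ}, i < r.leftBorder →
    Rot (graft L r (i+1)) (graft L r i)
  | leaf, i, h => by simp [leftBorder] at h
  | node a b, 0, _ => by
      simpa using Rot.root L a b
  | node a b, i+1, h => by
      have := rot_graft_succ L (r := a) (i := i) (by simpa [leftBorder] using h)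
      exact Rot.left b this

theorem graft_tamariLE (L : BinTree) {r : BinTree} {i : ℕ} (h : i ≤ r.leftBorder) :
    TamariLE (graft L r i) (node L r) := by
  induction i with
  | zero => rw [graft_zero]; exact TamariLE.refl _
  | succ i ih =>
      exact Relation.ReflTransGen.head (rot_graft_succ L (by omega)) (ih (by omega))

theorem rot_into_graft : ∀ {i : ℕ} {L' R' U' : BinTree}, i ≤ R'.leftBorder →
    Rot U' (graft L' R' i) →
    ∃ L'' R'' i'', i'' ≤ R''.leftBorder ∧ TamariLE L'' L' ∧ TamariLE R'' R' ∧
      U' = graft L'' R'' i''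
  | 0, L', R', U', _, hrot => by
      rw [graft_zero] at hrot
      cases hrot with
      | root A B C =>
          exact ⟨L', node B C, 1, by simp [leftBorder], TamariLE.refl _, TamariLE.refl _,
            by simp⟩
      | left _ h => exact ⟨_, R', 0, Nat.zero_le _, h.tamariLE, TamariLE.refl _, by simp⟩
      | right _ h => exact ⟨L', _, 0, Nat.zero_le _, TamariLE.refl _, h.tamariLE, by simp⟩
  | i+1, L', leaf, U', h, hrot => by simp [leftBorder] at h
  | i+1, L', node a b, U', h, hrot => by
      have hia : i ≤ a.leftBorder := by simpa [leftBorder] using h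
      rw [graft_succ] at hrot
      cases hrot with
      | root A B C =>
          refine ⟨L', node (node a B) C, i+2, by simp [leftBorder]; omega,
            TamariLE.refl _, (Rot.root a B C).tamariLE, by simp⟩
      | left _ hX =>
          obtain ⟨L'', a'', i'', hi'', hL'', ha'', rfl⟩ := rot_into_graft hia hX
          exact ⟨L'', node a'' b, i''+1, by simp [leftBorder]; omega, hL'',
            ha''.nodeLeft b, by simp⟩
      | right _ hY =>
          exact ⟨L', node a _, i+1, by simp [leftBorder]; omega, TamariLE.refl _,
            TamariLE.nodeRight a hY.tamariLE, by simp⟩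

theorem le_node_decomp {T' L R : BinTree} (h : TamariLE T' (node L R)) :
    ∃ L' R' i, i ≤ R'.leftBorder ∧ TamariLE L' L ∧ TamariLE R' R ∧ T' = graft L' R' i := by
  induction h using Relation.ReflTransGen.head_induction_on with
  | refl => exact ⟨L, R, 0, Nat.zero_le _, TamariLE.refl _, TamariLE.refl _, by simp⟩
  | head hrot _ ih =>
      obtain ⟨L1, R1, i, hi, hL1, hR1, rfl⟩ := ih
      obtain ⟨L2, R2, i2, hi2, hL2, hR2, rfl⟩ := rot_into_graft hi hrot
      exact ⟨L2, R2, i2, hi2, hL2.trans hL1, hR2.trans hR1, rfl⟩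

end BinTree

namespace BinTree

theorem graft_inj_fixed : ∀ {i : ℕ} {L1 R1 L2 R2 : BinTree}, i ≤ R1.leftBorder →
    i ≤ R2.leftBorder → graft L1 R1 i = graft L2 R2 i → L1 = L2 ∧ R1 = R2
  | 0, L1, R1, L2, R2, _, _, h => by
      rw [graft_zero, graft_zero] at h
      exact ⟨(node.injEq _ _ _ _ ▸ h).1, (node.injEq _ _ _ _ ▸ h).2⟩
  | i+1, L1, leaf, L2, R2, h1, _, _ => by simp [leftBorder] at h1
  | i+1, L1, node a1 b1, L2, leaf, _, h2, _ => by simp [leftBorder] at h2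
  | i+1, L1, node a1 b1, L2, node a2 b2, h1, h2, h => by
      rw [graft_succ, graft_succ] at h
      have h' := node.injEq _ _ _ _ ▸ h
      obtain ⟨hL, ha⟩ := graft_inj_fixed (i := i) (by simpa [leftBorder] using h1)
        (by simpa [leftBorder] using h2) h'.1
      exact ⟨hL, by rw [ha, h'.2]⟩

theorem cut_size_lt {L1 R1 L2 R2 : BinTree} {i1 i2 : ℕ} (h1 : i1 ≤ R1.leftBorder)
    (h2 : i2 ≤ R2.leftBorder) (hlt : i1 < i2) (heq : graft L1 R1 i1 = graft L2 R2 i2) :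
    L2.size < L1.size := by
  have e1 : spineSub (graft L1 R1 i1) (i1 + 1) = L1 := spineSub_graft L1 h1
  have e2 : spineSub (graft L1 R1 i1) (i2 + 1) = L2 := by rw [heq]; exact spineSub_graft L2 h2
  have hlb : (graft L1 R1 i1).leftBorder = L2.leftBorder + i2 + 1 := by
    rw [heq]; exact leftBorder_graft L2 h2
  have := size_spineSub_lt_of_lt (t := graft L1 R1 i1) (i := i1 + 1) (j := i2 + 1)
    (by omega) (by omega)
  rwa [e1, e2] at this

theorem graft_inj {L1 R1 L2 R2 : BinTree} {i1 i2 : ℕ} (h1 : i1 ≤ R1.leftBorder)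
    (h2 : i2 ≤ R2.leftBorder) (hs : L1.size = L2.size)
    (heq : graft L1 R1 i1 = graft L2 R2 i2) : L1 = L2 ∧ R1 = R2 ∧ i1 = i2 := by
  rcases lt_trichotomy i1 i2 with h | h | h
  · exact absurd (cut_size_lt h1 h2 h heq) (by omega)
  · subst h
    obtain ⟨hL, hR⟩ := graft_inj_fixed h1 h2 heq
    exact ⟨hL, hR, rfl⟩
  · exact absurd (cut_size_lt h2 h1 h heq.symm) (by omega)

/-- The set of trees below `T` in the Tamari order, as a `Finset`. -/
def downFinset : BinTree → Finset BinTree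
  | leaf => {leaf}
  | node L R =>
      (((downFinset L) ×ˢ (downFinset R).sigma fun R' => Finset.range (R'.leftBorder + 1)).image
        fun p => graft p.1 p.2.1 p.2.2)

theorem mem_downFinset : ∀ {T T' : BinTree}, T' ∈ downFinset T ↔ TamariLE T' T
  | leaf, T' => by
      constructor
      · intro h
        have : T' = leaf := by simpa [downFinset] using h
        subst this; exact TamariLE.refl _
      · intro h
        simp [downFinset, eq_leaf_of_tamariLE_leaf h]
  | node L R, T' => by
      constructor
      · intro h
        simp only [downFinset, Finset.mem_image, Finset.mem_product, Finset.mem_sigma,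
          Finset.mem_range] at h
        obtain ⟨⟨L', R', i⟩, ⟨hL, hR, hi⟩, rfl⟩ := h
        exact (graft_tamariLE L' (Nat.lt_succ_iff.mp hi)).trans
          (TamariLE.node (mem_downFinset.1 hL) (mem_downFinset.1 hR))
      · intro h
        obtain ⟨L', R', i, hi, hL, hR, rfl⟩ := le_node_decomp h
        simp only [downFinset, Finset.mem_image, Finset.mem_product, Finset.mem_sigma,
          Finset.mem_range]
        exact ⟨⟨L', R', i⟩, ⟨mem_downFinset.2 hL, mem_downFinset.2 hR,
          Nat.lt_succ_iff.mpr hi⟩, rfl⟩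

theorem size_eq_of_mem_downFinset {T T' : BinTree} (h : T' ∈ downFinset T) :
    T'.size = T.size := (mem_downFinset.1 h).size_eq

open Polynomial in
theorem aux_geom (a m : ℕ) :
    (X - C 1) * ∑ i ∈ Finset.range (m+1), (X : ℤ[X]) ^ (a + i + 1)
      = X * X ^ a * (X * X ^ m - 1) := by
  have hsum : ∑ i ∈ Finset.range (m+1), (X : ℤ[X]) ^ (a + i + 1)
      = X ^ (a+1) * ∑ i ∈ Finset.range (m+1), (X : ℤ[X]) ^ i := by
    rw [Finset.mul_sum]
    refine Finset.sum_congr rfl fun i _ => ?_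
    rw [← pow_add]
    congr 1
    omega
  rw [hsum, C_1]
  have hg := geom_sum_mul (X : ℤ[X]) (m+1)
  linear_combination (X : ℤ[X]) ^ (a+1) * hg

end BinTree

namespace BinTree
open Polynomial

theorem tamPoly_eq_sum : ∀ T : BinTree,
    tamPoly T = ∑ T' ∈ downFinset T, (X : ℤ[X]) ^ T'.leftBorder
  | leaf => by simp [tamPoly, downFinset, leftBorder]
  | node L R => by
    have ihL := tamPoly_eq_sum L
    have ihR := tamPoly_eq_sum R
    have hcard : (tamPoly R).eval 1 = ((downFinset R).card : ℤ) := by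
      simp [ihR, eval_finset_sum]
    have hS : (∑ T' ∈ downFinset (node L R), (X : ℤ[X]) ^ T'.leftBorder)
        = ∑ L' ∈ downFinset L, ∑ R' ∈ downFinset R,
            ∑ i ∈ Finset.range (R'.leftBorder + 1),
              (X : ℤ[X]) ^ (L'.leftBorder + i + 1) := by
      have hd : downFinset (node L R)
          = (((downFinset L) ×ˢ (downFinset R).sigma
              fun R' => Finset.range (R'.leftBorder + 1)).image
            fun p => graft p.1 p.2.1 p.2.2) := rfl
      have hinj : ∀ p ∈ ((downFinset L) ×ˢ (downFinset R).sigma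
            fun R' => Finset.range (R'.leftBorder + 1)),
          ∀ q ∈ ((downFinset L) ×ˢ (downFinset R).sigma
            fun R' => Finset.range (R'.leftBorder + 1)),
          (fun p : BinTree × (Σ _ : BinTree, ℕ) => graft p.1 p.2.1 p.2.2) p
            = (fun p : BinTree × (Σ _ : BinTree, ℕ) => graft p.1 p.2.1 p.2.2) q → p = q := by
        rintro ⟨L1, R1, i1⟩ hp ⟨L2, R2, i2⟩ hq hpq
        simp only [Finset.mem_product, Finset.mem_sigma, Finset.mem_range] at hp hq
        simp only at hpq
        have hs : L1.size = L2.size := by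
          rw [size_eq_of_mem_downFinset hp.1, size_eq_of_mem_downFinset hq.1]
        obtain ⟨hL, hR, hi⟩ := graft_inj (Nat.lt_succ_iff.mp hp.2.2)
          (Nat.lt_succ_iff.mp hq.2.2) hs hpq
        subst hL; subst hR; subst hi; rfl
      rw [hd, Finset.sum_image hinj, Finset.sum_product]
      simp only [Finset.sum_sigma]
      refine Finset.sum_congr rfl fun L' _ => Finset.sum_congr rfl fun R' hR' =>
        Finset.sum_congr rfl fun i hi => ?_
      rw [leftBorder_graft L' (Nat.lt_succ_iff.mp (Finset.mem_range.mp hi))]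
    have hRsum : X * tamPoly R - C ((tamPoly R).eval 1)
        = ∑ R' ∈ downFinset R, ((X : ℤ[X]) * X ^ R'.leftBorder - 1) := by
      rw [hcard, ihR, Finset.sum_sub_distrib, Finset.sum_const, nsmul_eq_mul, mul_one,
        Finset.mul_sum]
      simp
    have eL : X * tamPoly L = ∑ L' ∈ downFinset L, (X : ℤ[X]) * X ^ L'.leftBorder := by
      rw [ihL, Finset.mul_sum]
    have key : X * tamPoly L * (X * tamPoly R - C ((tamPoly R).eval 1))
        = (X - C 1) * ∑ T' ∈ downFinset (node L R), (X : ℤ[X]) ^ T'.leftBorder := by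
      calc X * tamPoly L * (X * tamPoly R - C ((tamPoly R).eval 1))
          = ∑ L' ∈ downFinset L, ∑ R' ∈ downFinset R,
              ((X : ℤ[X]) * X ^ L'.leftBorder) * (X * X ^ R'.leftBorder - 1) := by
            rw [eL, hRsum, Finset.sum_mul_sum]
        _ = ∑ L' ∈ downFinset L, ∑ R' ∈ downFinset R,
              (X - C 1) * ∑ i ∈ Finset.range (R'.leftBorder + 1),
                (X : ℤ[X]) ^ (L'.leftBorder + i + 1) := by
            refine Finset.sum_congr rfl fun L' _ => Finset.sum_congr rfl fun R' _ => ?_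
            rw [aux_geom]
        _ = (X - C 1) * ∑ L' ∈ downFinset L, ∑ R' ∈ downFinset R,
              ∑ i ∈ Finset.range (R'.leftBorder + 1),
                (X : ℤ[X]) ^ (L'.leftBorder + i + 1) := by
            rw [Finset.mul_sum]
            exact Finset.sum_congr rfl fun L' _ => (Finset.mul_sum _ _ _).symm
        _ = (X - C 1) * ∑ T' ∈ downFinset (node L R), (X : ℤ[X]) ^ T'.leftBorder := by
            rw [hS]
    show (X * tamPoly L * (X * tamPoly R - C ((tamPoly R).eval 1))) /ₘ (X - C 1) = _
    rw [key, mul_divByMonic_cancel_left _ (monic_X_sub_C 1)]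

end BinTree

/-- For a binary tree `T` of size `n`, the value `B_T(1)` of the Tamari
polynomial of `T` at `x = 1` equals the number of binary trees `T'` of size `n` with
`T' ≤ T` in the Tamari order. -/
theorem tamPoly_eval_one (T : BinTree) :
    (tamPoly T).eval 1 =
      (Nat.card {T' : BinTree // T'.size = T.size ∧ TamariLE T' T} : ℤ) := by
  have hequiv : {T' : BinTree // T'.size = T.size ∧ TamariLE T' T} ≃
      {T' : BinTree // T' ∈ BinTree.downFinset T} :=
    Equiv.subtypeEquivRight fun T' => by
      rw [BinTree.mem_downFinset]
      exact ⟨fun h => h.2, fun h => ⟨h.size_eq, h⟩⟩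
  rw [Nat.card_congr hequiv, Nat.card_eq_finsetCard, BinTree.tamPoly_eq_sum]
  simp [Polynomial.eval_finset_sum]
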